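/- arXiv:2007.11904 — 2 statements merged into one kernel-verified Lean document; each statement's English description precedes it below -/
import Mathlib

section
/- Let C ⊆ ℝ be a fat Cantor set (compact, totally disconnected, with positive Lebesgue measure) and μ := ℒ¹|_C. Then W^{1,2}(ℝ,μ) = L²(μ) and |D_μ f| = 0 μ-a.e. for every f ∈ W^{1,2}(ℝ,μ); equivalently, the tangent distribution satisfies T_μ(x) = {0} for μ-a.e. x, while the Alberti–Marchese distribution satisfies V_μ(x) = ℝ for μ-a.e. x. -/
open MeasureTheory Filter Metric Set Topology
open scoped NNReal ENNReal

noncomputable section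

instance curveMS (X : Type*) [MetricSpace X] : MeasurableSpace C(unitInterval, X) := borel _
instance curveBS (X : Type*) [MetricSpace X] : BorelSpace C(unitInterval, X) := ⟨rfl⟩

/-- `g` is an (integrable-type) speed bound for the curve `γ`, i.e.
`dist (γ s) (γ t) ≤ ∫_s^t g`. -/
def speedBound {X : Type*} [MetricSpace X] (γ : C(unitInterval, X)) (g : ℝ → ℝ) : Prop :=
  ∀ s t : unitInterval, s ≤ t →
    dist (γ s) (γ t) ≤ ∫ r in Set.Ioc (s : ℝ) (t : ℝ), g r

/-- `π` is a test plan on `(X, d, μ)` with (jointly measurable) speed bound `g`: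
`π` is a probability measure with bounded compression, concentrated on `AC²` curves,
with finite kinetic energy (witnessed by `g`). -/
def IsTestPlanWith {X : Type*} [MetricSpace X] [MeasurableSpace X]
    (μ : Measure X) (π : Measure C(unitInterval, X))
    (g : C(unitInterval, X) → ℝ → ℝ) : Prop :=
  IsProbabilityMeasure π ∧
  (∃ C : ℝ≥0, 0 < C ∧ ∀ t : unitInterval,
      Measure.map (fun γ : C(unitInterval, X) => γ t) π ≤ (C : ℝ≥0∞) • μ) ∧
  (∀ γ r, 0 ≤ g γ r) ∧
  Measurable (Function.uncurry g) ∧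
  (∀ᵐ γ ∂π, speedBound γ (g γ)) ∧
  (∫⁻ γ, (∫⁻ r in Set.Icc (0:ℝ) 1, ENNReal.ofReal ((g γ r) ^ 2)) ∂π) < ⊤

/-- `π` is a test plan on `(X, d, μ)`. -/
def IsTestPlan {X : Type*} [MetricSpace X] [MeasurableSpace X]
    (μ : Measure X) (π : Measure C(unitInterval, X)) : Prop :=
  ∃ g, IsTestPlanWith μ π g

/-- Value of a curve at a real time `t ∈ [0,1]`. -/
def curveAt {X : Type*} [MetricSpace X] (γ : C(unitInterval, X)) (t : ℝ) : X :=
  γ (Set.projIcc (0:ℝ) 1 zero_le_one t)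

/-- `G` is a weak upper gradient of `f`: along every test plan, the variation of `f`
between the endpoints is controlled by `∫ G(γ_t)|γ̇_t| dt`. -/
def IsWeakUpperGradient {X : Type*} [MetricSpace X] [MeasurableSpace X]
    (μ : Measure X) (f G : X → ℝ) : Prop :=
  ∀ (π : Measure C(unitInterval, X)) (g : C(unitInterval, X) → ℝ → ℝ),
    IsTestPlanWith μ π g →
    ∀ᵐ γ ∂π, |f (γ 1) - f (γ 0)| ≤ ∫ t in Set.Icc (0:ℝ) 1, G (curveAt γ t) * g γ t

/-- The Sobolev space `W^{1,2}(X, μ)` defined via test plans. -/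
def MemW12 {X : Type*} [MetricSpace X] [MeasurableSpace X]
    (μ : Measure X) (f : X → ℝ) : Prop :=
  MemLp f 2 μ ∧ ∃ G : X → ℝ, MemLp G 2 μ ∧ (∀ᵐ x ∂μ, 0 ≤ G x) ∧ IsWeakUpperGradient μ f G

/-- `G` is the minimal weak upper gradient `|D_μ f|` of `f`. -/
def IsMinimalWUG {X : Type*} [MetricSpace X] [MeasurableSpace X]
    (μ : Measure X) (f G : X → ℝ) : Prop :=
  MemLp G 2 μ ∧ (∀ᵐ x ∂μ, 0 ≤ G x) ∧ IsWeakUpperGradient μ f G ∧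
  ∀ H : X → ℝ, MemLp H 2 μ → (∀ᵐ x ∂μ, 0 ≤ H x) → IsWeakUpperGradient μ f H →
    ∀ᵐ x ∂μ, G x ≤ H x

end

open scoped RealInnerProductSpace
noncomputable section

/-- A distribution on the Euclidean space `E`: a Borel assignment of a linear subspace to
each point (Borel measurability expressed via the distance functions to the fibers). -/
def IsBorelDistribution {E : Type*} [NormedAddCommGroup E] [InnerProductSpace ℝ E]
    [MeasurableSpace E] (V : E → Submodule ℝ E) : Prop :=
  ∀ w : E, Measurable fun x : E => Metric.infDist w ((V x : Set E))

/-- The extension of a curve `γ : [0,1] → E` to `ℝ` by projection onto `[0,1]`. -/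
def curveExt {E : Type*} [MetricSpace E] (γ : C(unitInterval, E)) (t : ℝ) : E :=
  γ (Set.projIcc (0:ℝ) 1 zero_le_one t)

/-- The distribution `V` contains the velocities of all test plans: for every test plan
`π` and `π`-a.e. curve `γ`, `γ̇_t ∈ V(γ_t)` for a.e. `t ∈ [0,1]`. -/
def VelocityTangent {E : Type*} [NormedAddCommGroup E] [InnerProductSpace ℝ E]
    [MeasurableSpace E] (μ : Measure E) (V : E → Submodule ℝ E) : Prop :=
  ∀ (π : Measure C(unitInterval, E)) g, IsTestPlanWith μ π g →
    ∀ᵐ γ ∂π, ∀ᵐ t ∂(volume.restrict (Set.Icc (0:ℝ) 1)),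
      ∀ d : E, HasDerivAt (curveExt γ) d t → d ∈ V (curveExt γ t)

/-- `T` is the tangent distribution `T_μ`: the minimal Borel distribution containing the
velocities of all test plans. -/
def IsTangentDistribution {E : Type*} [NormedAddCommGroup E] [InnerProductSpace ℝ E]
    [MeasurableSpace E] (μ : Measure E) (T : E → Submodule ℝ E) : Prop :=
  IsBorelDistribution T ∧ VelocityTangent μ T ∧
  ∀ V : E → Submodule ℝ E, IsBorelDistribution V → VelocityTangent μ V →
    ∀ᵐ x ∂μ, T x ≤ V x

/-- Every compactly supported Lipschitz function is `μ`-a.e. differentiable along `V`. -/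
def AMDifferentiable {E : Type*} [NormedAddCommGroup E] [InnerProductSpace ℝ E]
    [MeasurableSpace E] (μ : Measure E) (V : E → Submodule ℝ E) : Prop :=
  ∀ f : E → ℝ, (∃ K, LipschitzWith K f) → HasCompactSupport f →
    ∃ gf : E → E, (∀ᵐ x ∂μ, gf x ∈ V x) ∧
      ∀ᵐ x ∂μ, Filter.Tendsto (fun v : E => (f (x + v) - f x - ⟪gf x, v⟫) / ‖v‖)
        (nhdsWithin 0 (((V x : Set E)) \ {0})) (nhds 0)

/-- `V` is the Alberti–Marchese distribution `V_μ`: the maximal Borel distribution along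
which every compactly supported Lipschitz function is `μ`-a.e. differentiable. -/
def IsAMDistribution {E : Type*} [NormedAddCommGroup E] [InnerProductSpace ℝ E]
    [MeasurableSpace E] (μ : Measure E) (V : E → Submodule ℝ E) : Prop :=
  IsBorelDistribution V ∧ AMDifferentiable μ V ∧
  ∀ W : E → Submodule ℝ E, IsBorelDistribution W → AMDifferentiable μ W →
    ∀ᵐ x ∂μ, W x ≤ V x

/-- On a totally disconnected closed set, every test plan consists of constant curves. -/
lemma testPlan_ae_const {C : Set ℝ} (hC : IsClosed C) (hTD : IsTotallyDisconnected C)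
    (π : Measure C(unitInterval, ℝ)) (g : C(unitInterval, ℝ) → ℝ → ℝ)
    (h : IsTestPlanWith (MeasureTheory.volume.restrict C) π g) :
    ∀ᵐ γ ∂π, ∀ s : unitInterval, γ s = γ 0 := by
  obtain ⟨hprob, ⟨K, hK, hmap⟩, -, -, -, -⟩ := h
  have hμc : (MeasureTheory.volume.restrict C) Cᶜ = 0 := by
    rw [Measure.restrict_apply hC.measurableSet.compl]
    simp
  have hevt : ∀ t : unitInterval, ∀ᵐ γ ∂π, γ t ∈ C := by
    intro t
    have hm : Measurable fun γ : C(unitInterval, ℝ) => γ t :=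
      (continuous_eval_const t).measurable
    have h2 : (Measure.map (fun γ : C(unitInterval, ℝ) => γ t) π) Cᶜ ≤
        ((K : ℝ≥0∞) • (MeasureTheory.volume.restrict C)) Cᶜ := Measure.le_iff'.1 (hmap t) Cᶜ
    rw [Measure.map_apply hm hC.measurableSet.compl, Measure.smul_apply, hμc] at h2
    simp only [smul_zero, le_zero_iff] at h2
    exact (ae_iff).2 h2
  obtain ⟨D, hDc, hDd⟩ := TopologicalSpace.exists_countable_dense unitInterval
  have hball : ∀ᵐ γ ∂π, ∀ t ∈ D, γ t ∈ C := (ae_ball_iff hDc).2 fun t _ => hevt t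
  filter_upwards [hball] with γ hγ
  have hall : ∀ t, γ t ∈ C := by
    have hclosed : IsClosed (γ ⁻¹' C) := hC.preimage γ.continuous
    have hd : Dense (γ ⁻¹' C) := hDd.mono fun t ht => hγ t ht
    intro t
    have : γ ⁻¹' C = univ := hclosed.closure_eq ▸ hd.closure_eq
    exact (this ▸ Set.mem_univ t : t ∈ γ ⁻¹' C)
  have hsub : (Set.range γ).Subsingleton :=
    hTD (Set.range γ) (Set.range_subset_iff.2 hall) (isPreconnected_range γ.continuous)
  exact fun s => hsub (Set.mem_range_self s) (Set.mem_range_self 0)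

/-- for a fat Cantor set `C ⊆ ℝ` and `μ := ℒ¹|_C`, the Sobolev space
`W^{1,2}(ℝ,μ)` is all of `L²(μ)` with vanishing minimal weak upper gradients;
equivalently the tangent distribution is trivial `μ`-a.e., while the Alberti–Marchese
distribution is all of `ℝ` `μ`-a.e. -/
theorem stmt12 (C : Set ℝ) (hC : IsCompact C) (hTD : IsTotallyDisconnected C)
    (hpos : 0 < MeasureTheory.volume C) :
    (∀ f : ℝ → ℝ, MemLp f 2 (MeasureTheory.volume.restrict C) →
      MemW12 (MeasureTheory.volume.restrict C) f ∧
      IsMinimalWUG (MeasureTheory.volume.restrict C) f (fun _ => 0)) ∧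
    (∀ T : ℝ → Submodule ℝ ℝ, IsTangentDistribution (MeasureTheory.volume.restrict C) T →
      ∀ᵐ x ∂(MeasureTheory.volume.restrict C), T x = ⊥) ∧
    (∀ V : ℝ → Submodule ℝ ℝ, IsAMDistribution (MeasureTheory.volume.restrict C) V →
      ∀ᵐ x ∂(MeasureTheory.volume.restrict C), V x = ⊤) := by
  set μ := MeasureTheory.volume.restrict C with hμ
  have hWUG : ∀ f : ℝ → ℝ, IsWeakUpperGradient μ f (fun _ => 0) := by
    intro f π g hπ
    filter_upwards [testPlan_ae_const hC.isClosed hTD π g hπ] with γ hγ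
    have h0 : γ 1 = γ 0 := hγ 1
    simp [h0]
  refine ⟨?_, ?_, ?_⟩
  · intro f hf
    refine ⟨⟨hf, (fun _ => 0), ?_, ?_, hWUG f⟩, ?_, ?_, hWUG f, ?_⟩
    · exact MemLp.zero
    · exact Filter.Eventually.of_forall fun x => le_refl 0
    · exact MemLp.zero
    · exact Filter.Eventually.of_forall fun x => le_refl 0
    · intro H _ hH _
      exact hH
  · intro T hT
    obtain ⟨-, -, hmin⟩ := hT
    have hVT : VelocityTangent μ (fun _ => (⊥ : Submodule ℝ ℝ)) := by
      intro π g hπ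
      filter_upwards [testPlan_ae_const hC.isClosed hTD π g hπ] with γ hγ
      refine Filter.Eventually.of_forall fun t => fun d hd => ?_
      have hce : curveExt γ = fun _ => γ 0 := funext fun r => hγ _
      rw [hce] at hd
      have : d = 0 := hd.unique (hasDerivAt_const t (γ 0))
      simpa [Submodule.mem_bot] using this
    have hB : IsBorelDistribution (fun _ : ℝ => (⊥ : Submodule ℝ ℝ)) :=
      fun w => measurable_const
    filter_upwards [hmin _ hB hVT] with x hx
    exact le_bot_iff.1 hx
  · intro V hV
    obtain ⟨-, -, hmax⟩ := hV
    have hB : IsBorelDistribution (fun _ : ℝ => (⊤ : Submodule ℝ ℝ)) :=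
      fun w => measurable_const
    have hAM : AMDifferentiable μ (fun _ : ℝ => (⊤ : Submodule ℝ ℝ)) := by
      intro f hf _
      obtain ⟨K, hK⟩ := hf
      refine ⟨deriv f, Filter.Eventually.of_forall fun x => Submodule.mem_top, ?_⟩
      have hdiff : ∀ᵐ x ∂μ, DifferentiableAt ℝ f x :=
        ae_restrict_of_ae (hK.ae_differentiableAt)
      filter_upwards [hdiff] with x hx
      have hder : HasDerivAt f (deriv f x) x := hx.hasDerivAt
      have h1 : Tendsto (fun x' => ‖x' - x‖⁻¹ * ‖f x' - f x - (x' - x) • deriv f x‖)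
          (nhds x) (nhds 0) := hasDerivAt_iff_tendsto.1 hder
      have h2 : Tendsto (fun v : ℝ => ‖v‖⁻¹ * ‖f (x + v) - f x - v • deriv f x‖)
          (nhds 0) (nhds 0) := by
        have hc : Tendsto (fun v : ℝ => x + v) (nhds 0) (nhds x) := by
          simpa using (tendsto_const_nhds.add tendsto_id : Tendsto (fun v : ℝ => x + v)
            (nhds 0) (nhds (x + 0)))
        have := h1.comp hc
        simpa [Function.comp_def, add_sub_cancel_left] using this
      have h3 : Tendsto (fun v : ℝ => (f (x + v) - f x - ⟪deriv f x, v⟫) / ‖v‖)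
          (nhds 0) (nhds 0) := by
        refine squeeze_zero_norm (fun v => ?_) h2
        have : ⟪deriv f x, v⟫ = v • deriv f x := by
          simp [RCLike.inner_apply, mul_comm, smul_eq_mul]
        rw [this, norm_div, norm_norm, div_eq_inv_mul]
      exact h3.mono_left nhdsWithin_le_nhds
    filter_upwards [hmax _ hB hAM] with x hx
    exact top_unique hx

end
end

section
/- Let μ be a Radon measure on ℝⁿ and π a test plan on (ℝⁿ,d_Eucl,μ). Then for every v ∈ L²(ℝⁿ,ℝⁿ;μ) the map t ↦ v ∘ e_t, from [0,1] into L²(C([0,1],ℝⁿ),ℝⁿ;π), is continuous. -/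
open MeasureTheory Filter Metric Set Topology
open scoped NNReal ENNReal

private lemma ennreal_sq_add_three_le (x y z : ℝ≥0∞) :
    (x + y + z) ^ 2 ≤ 9 * (x ^ 2 + y ^ 2 + z ^ 2) := by
  have hmono : Monotone (fun a : ℝ≥0∞ => a ^ 2) := fun a b h => pow_le_pow_left₀ zero_le h 2
  have hm : x + y + z ≤ 3 * (x ⊔ y ⊔ z) := by
    have hx : x ≤ x ⊔ y ⊔ z := le_sup_of_le_left le_sup_left
    have hy : y ≤ x ⊔ y ⊔ z := le_sup_of_le_left le_sup_right
    have hz : z ≤ x ⊔ y ⊔ z := le_sup_right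
    calc x + y + z ≤ (x ⊔ y ⊔ z) + (x ⊔ y ⊔ z) + (x ⊔ y ⊔ z) := by gcongr
    _ = 3 * (x ⊔ y ⊔ z) := by ring
  calc (x + y + z) ^ 2 ≤ (3 * (x ⊔ y ⊔ z)) ^ 2 := pow_le_pow_left₀ zero_le hm 2
  _ = 9 * (x ⊔ y ⊔ z) ^ 2 := by ring
  _ ≤ 9 * (x ^ 2 + y ^ 2 + z ^ 2) := by
      gcongr
      rw [show (x ⊔ y ⊔ z) ^ 2 = x ^ 2 ⊔ y ^ 2 ⊔ z ^ 2 by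
        rw [hmono.map_sup, hmono.map_sup]]
      refine sup_le (sup_le ?_ ?_) ?_
      · exact le_trans le_self_add le_self_add
      · exact le_trans le_add_self le_self_add
      · exact le_add_self

private lemma ennreal_mul_div_two_mul_le (a ε : ℝ≥0∞) : a * (ε / (2 * a)) ≤ ε / 2 := by
  have h : ε / (2 * a) = (ε / 2) / a := by
    rw [div_eq_mul_inv, div_eq_mul_inv, div_eq_mul_inv,
      ENNReal.mul_inv (Or.inl (by norm_num)) (Or.inl (by norm_num)), mul_assoc]
  rw [h]
  exact ENNReal.mul_div_le

private lemma ennreal_rpow_two_eq (x : ℝ≥0∞) : x ^ (2 : ℝ) = x ^ 2 := by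
  rw [show (2 : ℝ) = ((2 : ℕ) : ℝ) by norm_num, ENNReal.rpow_natCast]


/-- for a Radon measure `μ` on `ℝⁿ`, a test plan `π` and
`v ∈ L²(ℝⁿ,ℝⁿ;μ)`, the map `t ↦ v ∘ e_t` from `[0,1]` to
`L²(C([0,1],ℝⁿ),ℝⁿ;π)` is continuous. -/
theorem stmt15 (n : ℕ) (μ : Measure (EuclideanSpace ℝ (Fin n))) [IsLocallyFiniteMeasure μ]
    (π : Measure C(unitInterval, EuclideanSpace ℝ (Fin n))) (hπ : IsTestPlan μ π)
    (v : EuclideanSpace ℝ (Fin n) → EuclideanSpace ℝ (Fin n)) (hv : MemLp v 2 μ) :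
    ∀ t : unitInterval,
      Filter.Tendsto (fun s : unitInterval => ∫ γ, ‖v (γ s) - v (γ t)‖ ^ 2 ∂π)
        (nhds t) (nhds 0) := by
  obtain ⟨g, hprob, ⟨C, hC0, hcomp⟩, -, -, -, -⟩ := hπ
  haveI := hprob
  intro t
  -- measurability of evaluation
  have heval : ∀ s : unitInterval, Measurable fun γ : C(unitInterval, EuclideanSpace ℝ (Fin n)) => γ s :=
    fun s => (continuous_eval_const s).measurable
  -- absolute continuity of the evaluated measures
  have hac : ∀ s : unitInterval,
      Measure.map (fun γ : C(unitInterval, EuclideanSpace ℝ (Fin n)) => γ s) π ≪ μ := fun s =>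
    (Measure.absolutelyContinuous_of_le (hcomp s)).trans Measure.smul_absolutelyContinuous
  -- compression inequality for lintegrals
  have hlint : ∀ (s : unitInterval) (f : EuclideanSpace ℝ (Fin n) → ℝ≥0∞), Measurable f →
      ∫⁻ γ, f (γ s) ∂π ≤ (C : ℝ≥0∞) * ∫⁻ x, f x ∂μ := by
    intro s f hf
    rw [← lintegral_map hf (heval s)]
    calc ∫⁻ x, f x ∂(Measure.map (fun γ : C(unitInterval, EuclideanSpace ℝ (Fin n)) => γ s) π)
        ≤ ∫⁻ x, f x ∂((C : ℝ≥0∞) • μ) := lintegral_mono' (hcomp s) le_rfl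
      _ = (C : ℝ≥0∞) * ∫⁻ x, f x ∂μ := lintegral_smul_measure _ _
  -- a strongly measurable representative of v
  set v' : EuclideanSpace ℝ (Fin n) → EuclideanSpace ℝ (Fin n) := hv.aestronglyMeasurable.mk v with hv'def
  have hv'sm : StronglyMeasurable v' := hv.aestronglyMeasurable.stronglyMeasurable_mk
  have hv'm : Measurable v' := hv'sm.measurable
  have hvv' : v =ᵐ[μ] v' := hv.aestronglyMeasurable.ae_eq_mk
  have hv'mem : MemLp v' 2 μ := hv.ae_eq hvv'
  have hveq : ∀ s : unitInterval, (fun γ : C(unitInterval, EuclideanSpace ℝ (Fin n)) => v (γ s))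
      =ᵐ[π] fun γ => v' (γ s) := fun s =>
    ae_of_ae_map (heval s).aemeasurable ((hac s).ae_le hvv')
  have hmeasI : ∀ s : unitInterval,
      Measurable fun γ : C(unitInterval, EuclideanSpace ℝ (Fin n)) => v' (γ s) - v' (γ t) := fun s =>
    (hv'm.comp (heval s)).sub (hv'm.comp (heval t))
  -- rewrite the Bochner integral as a lintegral
  have keyeq : ∀ s : unitInterval, ∫ γ, ‖v (γ s) - v (γ t)‖ ^ 2 ∂π
      = (∫⁻ γ, ((‖v' (γ s) - v' (γ t)‖₊ : ℝ≥0∞)) ^ 2 ∂π).toReal := by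
    intro s
    have h1 : (fun γ : C(unitInterval, EuclideanSpace ℝ (Fin n)) => ‖v (γ s) - v (γ t)‖ ^ 2)
        =ᵐ[π] fun γ => ‖v' (γ s) - v' (γ t)‖ ^ 2 := by
      filter_upwards [hveq s, hveq t] with γ h1 h2
      rw [h1, h2]
    rw [integral_congr_ae h1, integral_eq_lintegral_of_nonneg_ae
      (ae_of_all _ fun γ => sq_nonneg _)
      (((hmeasI s).norm.pow_const 2).aestronglyMeasurable)]
    congr 1
    refine lintegral_congr fun γ => ?_
    rw [ENNReal.ofReal_pow (norm_nonneg _), ofReal_norm, enorm_eq_nnnorm]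
  -- the main ℝ≥0∞-valued limit
  have main : Filter.Tendsto
      (fun s : unitInterval => ∫⁻ γ, ((‖v' (γ s) - v' (γ t)‖₊ : ℝ≥0∞)) ^ 2 ∂π)
      (nhds t) (nhds 0) := by
    rw [ENNReal.tendsto_nhds_zero]
    intro ε hε
    rcases eq_or_ne ε ∞ with rfl | hεtop
    · exact Filter.Eventually.of_forall fun s => le_top
    -- choose the approximation threshold
    set η : ℝ≥0∞ := min 1 (ε / (36 * C)) with hηdef
    have h36C : (36: ℝ≥0∞) * C ≠ ∞ := ENNReal.mul_ne_top (by norm_num) ENNReal.coe_ne_top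
    have hη0 : η ≠ 0 := by
      refine (lt_min one_pos (ENNReal.div_pos hε.ne' h36C)).ne'
    -- approximate by a continuous compactly supported function
    obtain ⟨w, hwsupp, hwnorm, hwcont, hwmem⟩ :=
      hv'mem.exists_hasCompactSupport_eLpNorm_sub_le (by norm_num : (2 : ℝ≥0∞) ≠ ∞) hη0
    set D : ℝ≥0∞ := ∫⁻ x, ((‖v' x - w x‖₊ : ℝ≥0∞)) ^ 2 ∂μ with hDdef
    have hD : D ≤ η ^ 2 := by
      have h2 := ENNReal.rpow_le_rpow hwnorm (by norm_num : (0 : ℝ) ≤ 2)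
      rw [eLpNorm_eq_lintegral_rpow_enorm_toReal (by norm_num) (by norm_num)] at h2
      simp only [ENNReal.toReal_ofNat, one_div] at h2
      rw [ENNReal.rpow_inv_rpow (by norm_num : (2:ℝ) ≠ 0)] at h2
      rw [ennreal_rpow_two_eq] at h2
      calc D = ∫⁻ x, ((‖(v' - w) x‖₊ : ℝ≥0∞)) ^ (2 : ℝ) ∂μ := by
              refine lintegral_congr fun x => ?_
              rw [ennreal_rpow_two_eq, Pi.sub_apply]
        _ ≤ η ^ 2 := h2
    -- bound on w
    obtain ⟨M, hM⟩ := hwsupp.exists_bound_of_continuous hwcont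
    -- middle term tends to zero by dominated convergence
    have hBtend : Filter.Tendsto
        (fun s : unitInterval => ∫⁻ γ, ((‖w (γ s) - w (γ t)‖₊ : ℝ≥0∞)) ^ 2 ∂π)
        (nhds t) (nhds 0) := by
      have hwm : Measurable w := hwcont.measurable
      have h := tendsto_lintegral_filter_of_dominated_convergence
        (μ := π) (l := nhds t)
        (F := fun s γ => ((‖w (γ s) - w (γ t)‖₊ : ℝ≥0∞)) ^ 2)
        (f := fun _ => 0)
        (fun _ => ENNReal.ofReal ((2 * M) ^ 2))
        (Filter.Eventually.of_forall fun s =>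
          ((measurable_coe_nnreal_ennreal.comp
            (((hwm.comp (heval s)).sub (hwm.comp (heval t))).nnnorm)).pow_const 2))
        (Filter.Eventually.of_forall fun s => ae_of_all _ fun γ => by
          have hle : ‖w (γ s) - w (γ t)‖ ≤ 2 * M := by
            calc ‖w (γ s) - w (γ t)‖ ≤ ‖w (γ s)‖ + ‖w (γ t)‖ := norm_sub_le _ _
              _ ≤ M + M := add_le_add (hM _) (hM _)
              _ = 2 * M := by ring
          calc ((‖w (γ s) - w (γ t)‖₊ : ℝ≥0∞)) ^ 2
              = ENNReal.ofReal (‖w (γ s) - w (γ t)‖ ^ 2) := by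
                rw [ENNReal.ofReal_pow (norm_nonneg _), ofReal_norm, enorm_eq_nnnorm]
            _ ≤ ENNReal.ofReal ((2 * M) ^ 2) :=
                ENNReal.ofReal_le_ofReal (pow_le_pow_left₀ (norm_nonneg _) hle 2)
        )
        (by simp [lintegral_const, measure_univ])
        (ae_of_all _ fun γ => by
          have hγ : Filter.Tendsto (fun s : unitInterval => γ s) (nhds t) (nhds (γ t)) :=
            γ.continuous.tendsto t
          have hcont : Continuous fun x : EuclideanSpace ℝ (Fin n) => ((‖w x - w (γ t)‖₊ : ℝ≥0∞)) ^ 2 :=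
            (ENNReal.continuous_pow 2).comp
              (ENNReal.continuous_coe.comp ((hwcont.sub continuous_const).nnnorm))
          have := (hcont.tendsto (γ t)).comp hγ
          simpa [Function.comp_def] using this)
      simpa using h
    -- eventually the middle term is small
    have hεd18 : (0 : ℝ≥0∞) < ε / 18 := ENNReal.div_pos hε.ne' (by norm_num)
    have hBev : ∀ᶠ s : unitInterval in nhds t,
        (∫⁻ γ, ((‖w (γ s) - w (γ t)‖₊ : ℝ≥0∞)) ^ 2 ∂π) ≤ ε / 18 :=
      (ENNReal.tendsto_nhds_zero.mp hBtend) _ hεd18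
    filter_upwards [hBev] with s hBs
    -- pointwise triangle + squaring estimate
    have hpt : ∀ γ : C(unitInterval, EuclideanSpace ℝ (Fin n)),
        ((‖v' (γ s) - v' (γ t)‖₊ : ℝ≥0∞)) ^ 2 ≤
          9 * (((‖v' (γ s) - w (γ s)‖₊ : ℝ≥0∞)) ^ 2
            + ((‖w (γ s) - w (γ t)‖₊ : ℝ≥0∞)) ^ 2
            + ((‖w (γ t) - v' (γ t)‖₊ : ℝ≥0∞)) ^ 2) := by
      intro γ
      have hdec : v' (γ s) - v' (γ t)
          = (v' (γ s) - w (γ s)) + (w (γ s) - w (γ t)) + (w (γ t) - v' (γ t)) := by abel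
      have htri : (‖v' (γ s) - v' (γ t)‖₊ : ℝ≥0∞)
          ≤ (‖v' (γ s) - w (γ s)‖₊ : ℝ≥0∞) + (‖w (γ s) - w (γ t)‖₊ : ℝ≥0∞)
            + (‖w (γ t) - v' (γ t)‖₊ : ℝ≥0∞) := by
        rw [hdec]
        calc ((‖(v' (γ s) - w (γ s)) + (w (γ s) - w (γ t)) + (w (γ t) - v' (γ t))‖₊ : ℝ≥0∞))
            ≤ ((‖(v' (γ s) - w (γ s)) + (w (γ s) - w (γ t))‖₊ + ‖w (γ t) - v' (γ t)‖₊ : ℝ≥0)) :=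
              ENNReal.coe_le_coe.mpr (nnnorm_add_le _ _)
          _ ≤ _ := by
              push_cast
              gcongr
              exact ENNReal.coe_le_coe.mpr (nnnorm_add_le _ _)
      calc ((‖v' (γ s) - v' (γ t)‖₊ : ℝ≥0∞)) ^ 2
          ≤ ((‖v' (γ s) - w (γ s)‖₊ : ℝ≥0∞) + (‖w (γ s) - w (γ t)‖₊ : ℝ≥0∞)
            + (‖w (γ t) - v' (γ t)‖₊ : ℝ≥0∞)) ^ 2 := pow_le_pow_left₀ zero_le htri 2
        _ ≤ _ := ennreal_sq_add_three_le _ _ _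
    -- measurability of the three pieces
    have hwm : Measurable w := hwcont.measurable
    have hfA : Measurable fun γ : C(unitInterval, EuclideanSpace ℝ (Fin n)) =>
        ((‖v' (γ s) - w (γ s)‖₊ : ℝ≥0∞)) ^ 2 :=
      (measurable_coe_nnreal_ennreal.comp
        (((hv'm.comp (heval s)).sub (hwm.comp (heval s))).nnnorm)).pow_const 2
    have hfB : Measurable fun γ : C(unitInterval, EuclideanSpace ℝ (Fin n)) =>
        ((‖w (γ s) - w (γ t)‖₊ : ℝ≥0∞)) ^ 2 :=
      (measurable_coe_nnreal_ennreal.comp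
        (((hwm.comp (heval s)).sub (hwm.comp (heval t))).nnnorm)).pow_const 2
    have hfC : Measurable fun γ : C(unitInterval, EuclideanSpace ℝ (Fin n)) =>
        ((‖w (γ t) - v' (γ t)‖₊ : ℝ≥0∞)) ^ 2 :=
      (measurable_coe_nnreal_ennreal.comp
        (((hwm.comp (heval t)).sub (hv'm.comp (heval t))).nnnorm)).pow_const 2
    -- bound the first and third integrals via compression
    have hA : (∫⁻ γ, ((‖v' (γ s) - w (γ s)‖₊ : ℝ≥0∞)) ^ 2 ∂π) ≤ (C : ℝ≥0∞) * D := by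
      have := hlint s (fun x => ((‖v' x - w x‖₊ : ℝ≥0∞)) ^ 2)
        ((measurable_coe_nnreal_ennreal.comp ((hv'm.sub hwm).nnnorm)).pow_const 2)
      exact this
    have hCterm : (∫⁻ γ, ((‖w (γ t) - v' (γ t)‖₊ : ℝ≥0∞)) ^ 2 ∂π) ≤ (C : ℝ≥0∞) * D := by
      have heq : (∫⁻ γ, ((‖w (γ t) - v' (γ t)‖₊ : ℝ≥0∞)) ^ 2 ∂π)
          = ∫⁻ γ, ((‖v' (γ t) - w (γ t)‖₊ : ℝ≥0∞)) ^ 2 ∂π := by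
        refine lintegral_congr fun γ => ?_
        rw [show w (γ t) - v' (γ t) = -(v' (γ t) - w (γ t)) by abel, nnnorm_neg]
      rw [heq]
      exact hlint t (fun x => ((‖v' x - w x‖₊ : ℝ≥0∞)) ^ 2)
        ((measurable_coe_nnreal_ennreal.comp ((hv'm.sub hwm).nnnorm)).pow_const 2)
    -- put everything together
    calc (∫⁻ γ, ((‖v' (γ s) - v' (γ t)‖₊ : ℝ≥0∞)) ^ 2 ∂π)
        ≤ ∫⁻ γ, 9 * (((‖v' (γ s) - w (γ s)‖₊ : ℝ≥0∞)) ^ 2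
            + ((‖w (γ s) - w (γ t)‖₊ : ℝ≥0∞)) ^ 2
            + ((‖w (γ t) - v' (γ t)‖₊ : ℝ≥0∞)) ^ 2) ∂π := lintegral_mono hpt
      _ = 9 * ((∫⁻ γ, ((‖v' (γ s) - w (γ s)‖₊ : ℝ≥0∞)) ^ 2 ∂π)
            + (∫⁻ γ, ((‖w (γ s) - w (γ t)‖₊ : ℝ≥0∞)) ^ 2 ∂π)
            + (∫⁻ γ, ((‖w (γ t) - v' (γ t)‖₊ : ℝ≥0∞)) ^ 2 ∂π)) := by
          rw [lintegral_const_mul _ (f := fun γ : C(unitInterval, EuclideanSpace ℝ (Fin n)) => ((‖v' (γ s) - w (γ s)‖₊ : ℝ≥0∞)) ^ 2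
              + ((‖w (γ s) - w (γ t)‖₊ : ℝ≥0∞)) ^ 2 + ((‖w (γ t) - v' (γ t)‖₊ : ℝ≥0∞)) ^ 2)
              (((hfA.add hfB).add hfC)),
            lintegral_add_right _ hfC, lintegral_add_right _ hfB]
      _ ≤ 9 * (((C : ℝ≥0∞) * D) + (ε / 18) + ((C : ℝ≥0∞) * D)) := by gcongr
      _ = 18 * (C : ℝ≥0∞) * D + 9 * (ε / 18) := by ring
      _ ≤ 18 * (C : ℝ≥0∞) * (ε / (36 * C)) + 9 * (ε / 18) := by
          gcongr
          calc D ≤ η ^ 2 := hD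
            _ = η * η := sq η
            _ ≤ 1 * (ε / (36 * C)) := mul_le_mul' (min_le_left _ _) (min_le_right _ _)
            _ = ε / (36 * C) := one_mul _
      _ ≤ ε / 2 + ε / 2 := by
          gcongr
          · calc (18 : ℝ≥0∞) * C * (ε / (36 * C))
                = (18 * C) * (ε / (2 * (18 * C))) := by ring_nf
              _ ≤ ε / 2 := ennreal_mul_div_two_mul_le _ _
          · calc (9 : ℝ≥0∞) * (ε / 18) = 9 * (ε / (2 * 9)) := by norm_num
              _ ≤ ε / 2 := ennreal_mul_div_two_mul_le _ _
      _ = ε := ENNReal.add_halves ε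
  -- conclude for the real-valued integrals
  have := (ENNReal.tendsto_toReal (by norm_num : (0 : ℝ≥0∞) ≠ ∞)).comp main
  simp only [Function.comp_def, ENNReal.toReal_zero] at this
  refine this.congr fun s => ?_
  exact (keyeq s).symm
end
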